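/- Let Λ ⊆ ℝ^I be a compact convex set containing δ(X) (in particular any Λ containing the marginal polytope M = conv δ(X)). If a node-wise substitution p is strictly Λ-improving for f, then p is strictly improving for f. -/

import Mathlib

open Finset

noncomputable section

variable {V : Type*} [Fintype V] [DecidableEq V]
variable {X : V → Type*} [∀ v, Fintype (X v)] [∀ v, DecidableEq (X v)]
variable {E : Finset (V × V)}

/-- The index set `I`: the constant component `∅`, unary components `(u, i)` and
pairwise components `(uv, ij)` for edges `uv ∈ E`. -/
abbrev GIdx (X : V → Type*) (E : Finset (V × V)) : Type _ :=
  Unit ⊕ (Σ v : V, X v) ⊕ (Σ e : {e : V × V // e ∈ E}, X e.1.1 × X e.1.2)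

/-- Vectors in `ℝ^I` (cost vectors and relaxed labelings live in the same space). -/
abbrev GVec (X : V → Type*) (E : Finset (V × V)) : Type _ := GIdx X E → ℝ

/-- Index of the constant component. -/
def cIdx : GIdx X E := Sum.inl ()

/-- Index of the unary component `(v, i)`. -/
def uIdx (v : V) (i : X v) : GIdx X E := Sum.inr (Sum.inl ⟨v, i⟩)

/-- Index of the pairwise component `(uv, ij)` of the edge `e = uv ∈ E`. -/
def pIdx (e : {e : V × V // e ∈ E}) (i : X e.1.1) (j : X e.1.2) : GIdx X E :=
  Sum.inr (Sum.inr ⟨e, (i, j)⟩)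

/-- The energy `E_f(x) = f_∅ + Σ_v f_v(x_v) + Σ_{uv∈E} f_{uv}(x_u,x_v)`. -/
def energy (f : GVec X E) (x : ∀ v, X v) : ℝ :=
  f cIdx + ∑ v : V, f (uIdx v (x v)) +
    ∑ e : {e : V × V // e ∈ E}, f (pIdx e (x e.1.1) (x e.1.2))

/-- The standard inner product on `ℝ^I`. -/
def dotp (f μ : GVec X E) : ℝ := ∑ idx : GIdx X E, f idx * μ idx

/-- The lifting (overcomplete representation) `δ : X → ℝ^I`. -/
def lift (x : ∀ v, X v) : GVec X E := fun idx =>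
  match idx with
  | Sum.inl _ => 1
  | Sum.inr (Sum.inl ⟨v, i⟩) => if x v = i then 1 else 0
  | Sum.inr (Sum.inr ⟨e, (i, j)⟩) => if x e.1.1 = i ∧ x e.1.2 = j then 1 else 0

/-- Application of a node-wise substitution to a labeling: `p(x)_v = p_v(x_v)`. -/
def applySub (p : ∀ v, X v → X v) (x : ∀ v, X v) : ∀ v, X v := fun v => p v (x v)

/-- All the component maps `p_v` are idempotent. -/
def NodewiseIdem (p : ∀ v, X v → X v) : Prop := ∀ (v : V) (i : X v), p v (p v i) = p v i

/-- `p` is strictly improving for the cost vector `f`: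
`E_f(p(x)) < E_f(x)` whenever `p(x) ≠ x`. -/
def StrictlyImproving (f : GVec X E) (p : ∀ v, X v → X v) : Prop :=
  ∀ x : ∀ v, X v, applySub p x ≠ x → energy f (applySub p x) < energy f x

/-- The adjoint `[p]ᵀ` of the linear extension of a node-wise substitution `p`,
acting on cost vectors: `([p]ᵀ f)_∅ = f_∅`, `([p]ᵀ f)_u(i) = f_u(p_u(i))`,
`([p]ᵀ f)_{uv}(i,j) = f_{uv}(p_u(i), p_v(j))`. -/
def Padj (p : ∀ v, X v → X v) (f : GVec X E) : GVec X E := fun idx =>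
  match idx with
  | Sum.inl _ => f cIdx
  | Sum.inr (Sum.inl ⟨v, i⟩) => f (uIdx v (p v i))
  | Sum.inr (Sum.inr ⟨e, (i, j)⟩) => f (pIdx e (p e.1.1 i) (p e.1.2 j))

/-- The linear extension `[p] : ℝ^I → ℝ^I` of a node-wise substitution `p`
(the adjoint of `Padj p` with respect to `dotp`): it satisfies `δ(p(x)) = [p] δ(x)`. -/
def Pmap (p : ∀ v, X v → X v) (μ : GVec X E) : GVec X E := fun idx =>
  match idx with
  | Sum.inl _ => μ cIdx
  | Sum.inr (Sum.inl ⟨v, i⟩) => ∑ i' : X v, if p v i' = i then μ (uIdx v i') else 0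
  | Sum.inr (Sum.inr ⟨e, (i, j)⟩) =>
      ∑ i' : X e.1.1, ∑ j' : X e.1.2,
        if p e.1.1 i' = i ∧ p e.1.2 j' = j then μ (pIdx e i' j') else 0

/-- `p` is strictly `Λ`-improving for `f` (`p ∈ S_f`):
`min_{μ∈Λ} ⟨f − [p]ᵀf, μ⟩ = 0` and every minimizer `μ` satisfies `[p]μ = μ`. -/
def StrictlyLambdaImproving (Λ : Set (GVec X E)) (f : GVec X E)
    (p : ∀ v, X v → X v) : Prop :=
  IsLeast {r : ℝ | ∃ μ ∈ Λ, dotp (f - Padj p f) μ = r} 0 ∧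
    ∀ μ ∈ Λ, dotp (f - Padj p f) μ = 0 → Pmap p μ = μ

/-- The subset-to-one substitution determined by a test labeling `y` and
sets `Y_v` of labels replaced by `y_v`. -/
def subToOne (y : ∀ v, X v) (Y : ∀ v, Finset (X v)) : ∀ v, X v → X v :=
  fun v i => if i ∈ Y v then y v else i

/-- Membership in the class `P^{2,y}` of subset-to-one substitutions. -/
def InPtwo (y : ∀ v, X v) (p : ∀ v, X v → X v) : Prop :=
  ∃ Y : ∀ v, Finset (X v), (∀ v, y v ∉ Y v) ∧
    ∀ (v : V) (i : X v), p v i = if i ∈ Y v then y v else i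

/-- The local polytope `Λ`. -/
def localPolytope (X : V → Type*) [∀ v, Fintype (X v)] (E : Finset (V × V)) :
    Set (GVec X E) :=
  { μ | (∀ idx, 0 ≤ μ idx) ∧ μ cIdx = 1 ∧
      (∀ u : V, ∑ i : X u, μ (uIdx u i) = μ cIdx) ∧
      (∀ (e : {e : V × V // e ∈ E}) (i : X e.1.1),
        ∑ j : X e.1.2, μ (pIdx e i j) = μ (uIdx e.1.1 i)) ∧
      (∀ (e : {e : V × V // e ∈ E}) (j : X e.1.2),
        ∑ i : X e.1.1, μ (pIdx e i j) = μ (uIdx e.1.2 j)) }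

/-- A dual vector `φ`: for each edge `uv ∈ E` messages `φ_{uv} : X_u → ℝ` (to the tail)
and `φ_{vu} : X_v → ℝ` (to the head), and a number `φ_u` for every node. -/
structure GDual (X : V → Type*) (E : Finset (V × V)) where
  fwd : ∀ e : {e : V × V // e ∈ E}, X e.1.1 → ℝ
  bwd : ∀ e : {e : V × V // e ∈ E}, X e.1.2 → ℝ
  nd : V → ℝ

/-- Reparametrized unary cost `g^φ_u(i) = g_u(i) + Σ_{v∈nb(u)} φ_{uv}(i) − φ_u`. -/
def repUn (g : GVec X E) (φ : GDual X E) (u : V) (i : X u) : ℝ :=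
  g (uIdx u i) +
    (∑ e : {e : V × V // e ∈ E},
      ((if h : e.1.1 = u then φ.fwd e (cast (congrArg X h.symm) i) else 0) +
        (if h : e.1.2 = u then φ.bwd e (cast (congrArg X h.symm) i) else 0))) -
    φ.nd u

/-- Reparametrized pairwise cost `g^φ_{uv}(i,j) = g_{uv}(i,j) − φ_{uv}(i) − φ_{vu}(j)`. -/
def repPw (g : GVec X E) (φ : GDual X E) (e : {e : V × V // e ∈ E})
    (i : X e.1.1) (j : X e.1.2) : ℝ :=
  g (pIdx e i j) - φ.fwd e i - φ.bwd e j

/-- Reparametrized constant `g^φ_∅ = g_∅ + Σ_u φ_u` (the dual lower bound). -/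
def repC (g : GVec X E) (φ : GDual X E) : ℝ := g cIdx + ∑ u : V, φ.nd u

/-- Dual feasibility: `g^φ ≥ 0` componentwise. -/
def DualFeasible (g : GVec X E) (φ : GDual X E) : Prop :=
  (∀ (u : V) (i : X u), 0 ≤ repUn g φ u i) ∧
    ∀ (e : {e : V × V // e ∈ E}) (i : X e.1.1) (j : X e.1.2), 0 ≤ repPw g φ e i j

/-- Arc consistency of the reparametrized cost `g^φ`. -/
def ArcConsistent (g : GVec X E) (φ : GDual X E) : Prop :=
  (∀ (e : {e : V × V // e ∈ E}) (i : X e.1.1) (j : X e.1.2),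
      repPw g φ e i j = 0 → repUn g φ e.1.1 i = 0 ∧ repUn g φ e.1.2 j = 0) ∧
  (∀ (e : {e : V × V // e ∈ E}) (i : X e.1.1),
      repUn g φ e.1.1 i = 0 → ∃ j : X e.1.2, repPw g φ e i j = 0) ∧
  (∀ (e : {e : V × V // e ∈ E}) (j : X e.1.2),
      repUn g φ e.1.2 j = 0 → ∃ i : X e.1.1, repPw g φ e i j = 0)

/-- The reduced cost vector `ḡ` associated with the subset-to-one substitution `p ∈ P^{2,y}`
given by the sets `Y_v` (where `g = f − [p]ᵀ f`). -/
def reduced (f : GVec X E) (y : ∀ v, X v) (Y : ∀ v, Finset (X v)) : GVec X E :=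
  fun idx =>
    match idx with
    | Sum.inl _ => 0
    | Sum.inr (Sum.inl ⟨v, i⟩) => (f - Padj (subToOne y Y) f) (uIdx v i)
    | Sum.inr (Sum.inr ⟨e, (i, j)⟩) =>
        let g : GVec X E := f - Padj (subToOne y Y) f
        let dvu : ℝ := sInf ((fun i' => g (pIdx e i' j)) '' {i' : X e.1.1 | i' ∉ Y e.1.1})
        let duv : ℝ := sInf ((fun j' => g (pIdx e i j')) '' {j' : X e.1.2 | j' ∉ Y e.1.2})
        if i ∈ Y e.1.1 then
          if j ∈ Y e.1.2 then min (dvu + duv) (g (pIdx e i j)) else duv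
        else if j ∈ Y e.1.2 then dvu else 0

lemma dotp_lift_eq_energy (g : GVec X E) (x : ∀ v, X v) :
    dotp g (lift x) = energy g x := by
  unfold dotp energy lift
  rw [Fintype.sum_sum_type, Fintype.sum_sum_type, ← Finset.univ_sigma_univ, Finset.sum_sigma,
    ← Finset.univ_sigma_univ, Finset.sum_sigma]
  simp [uIdx, pIdx, cIdx, mul_ite, ite_and, Fintype.sum_prod_type, Finset.sum_ite_eq]
  ring

lemma Pmap_lift (p : ∀ v, X v → X v) (x : ∀ v, X v) :
    Pmap (E := E) p (lift x) = lift (applySub p x) := by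
  funext idx
  match idx with
  | Sum.inl _ => rfl
  | Sum.inr (Sum.inl ⟨v, i⟩) =>
      simp only [Pmap, lift, applySub, uIdx]
      rw [Finset.sum_eq_single (x v)]
      · simp
        exact if_congr Iff.rfl rfl rfl
      · intro b _ hb
        simp [Ne.symm hb]
      · simp
  | Sum.inr (Sum.inr ⟨e, (i, j)⟩) =>
      simp only [Pmap, lift, applySub, pIdx]
      rw [Finset.sum_eq_single (x e.1.1)]
      · rw [Finset.sum_eq_single (x e.1.2)]
        · simp
          exact if_congr Iff.rfl rfl rfl
        · intro b _ hb
          simp [Ne.symm hb]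
        · simp
      · intro b _ hb
        apply Finset.sum_eq_zero
        intro j' _
        simp [Ne.symm hb]
      · simp

lemma lift_injective : Function.Injective (lift (X := X) (E := E)) := by
  intro x y hxy
  funext v
  have := congrFun hxy (uIdx v (x v))
  simp only [lift, uIdx] at this
  by_contra hne
  simp [Ne.symm hne] at this

theorem strictly_Lambda_improving_implies_strictly_improving
    [∀ v, Nonempty (X v)]
    (f : GVec X E) (Λ : Set (GVec X E)) (hcomp : IsCompact Λ) (hconv : Convex ℝ Λ)
    (hlift : ∀ x : ∀ v, X v, lift x ∈ Λ)
    (p : ∀ v, X v → X v) (hidem : NodewiseIdem p)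
    (h : StrictlyLambdaImproving Λ f p) :
    StrictlyImproving f p := by
  intro x hx
  have key : ∀ z : ∀ v, X v, dotp (f - Padj p f) (lift z) = energy f z - energy f (applySub p z) := by
    intro z
    have h1 : dotp (f - Padj p f) (lift z) = dotp f (lift z) - dotp (Padj p f) (lift z) := by
      unfold dotp
      rw [← Finset.sum_sub_distrib]
      exact Finset.sum_congr rfl fun idx _ => by simp [sub_mul]
    rw [h1, dotp_lift_eq_energy, dotp_lift_eq_energy]; rfl
  have h0 : (0 : ℝ) ≤ dotp (f - Padj p f) (lift x) := h.1.2 ⟨lift x, hlift x, rfl⟩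
  rcases lt_or_eq_of_le h0 with hlt | heq
  · rw [key x] at hlt; linarith
  · exfalso
    have := h.2 (lift x) (hlift x) heq.symm
    rw [Pmap_lift] at this
    exact hx (lift_injective this)

end
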